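/- arXiv:math/0702793 — 3 statements merged into one kernel-verified Lean document; each statement's English description precedes it below -/
import Mathlib

section
/- If X is an injective object in the category of representations of a quiver Q by left R-modules, then for every vertex v, the canonical morphism X(v) → ∏_{a : s(a)=v} X(t(a)) induced by the maps X(a) is a split epimorphism of R-modules. -/
open CategoryTheory

/-- The canonical morphism `X(v) → ∏_{a : s(a) = v} X(t(a))` induced by the maps `X(a)`,
where the product runs over all arrows `a` of `Q` with source `v`. -/
noncomputable def canonicalSourceMap (Q : Type) [Quiver Q] (R : Type) [Ring R]
    (X : CategoryTheory.Paths Q ⥤ ModuleCat R) (v : Q) :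
    X.obj ((Paths.of Q).obj v) →ₗ[R] ((a : Σ w : Q, v ⟶ w) → X.obj ((Paths.of Q).obj a.1)) :=
  LinearMap.pi fun a => (X.map ((Paths.of Q).map a.2)).hom

section Aux

variable {Q : Type} [Quiver Q] {v : Q}

/-- Extract the first arrow of a path (`none` if the path is trivial). -/
def firstArrowAux : ∀ {w : Q}, Quiver.Path v w → Option (Σ w' : Q, (v ⟶ w') × Quiver.Path w' w)
  | _, .nil => none
  | _, .cons .nil e => some ⟨_, e, .nil⟩
  | _, .cons (.cons p e') e =>
      (firstArrowAux (.cons p e')).map fun x => ⟨x.1, x.2.1, x.2.2.cons e⟩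

theorem firstArrowAux_comp {t : Q} (a : v ⟶ t) {w : Q} (p : Quiver.Path t w) :
    firstArrowAux (a.toPath.comp p) = some ⟨t, a, p⟩ := by
  induction p with
  | nil => rfl
  | cons q e ih =>
    cases q with
    | nil => rfl
    | cons r e' =>
      show (firstArrowAux (a.toPath.comp ((r.cons e')))).map _ = _
      rw [ih]
      rfl

theorem firstArrowAux_cons_isSome {u w : Q} (q : Quiver.Path v u) (e : u ⟶ w) :
    (firstArrowAux (q.cons e)).isSome := by
  induction q generalizing w with
  | nil => rfl
  | cons r e' ih =>
    show (Option.map _ (firstArrowAux (r.cons e'))).isSome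
    rw [Option.isSome_map]
    exact ih e'

theorem firstArrowAux_eq_some {w : Q} {p : Quiver.Path v w}
    {x : Σ w' : Q, (v ⟶ w') × Quiver.Path w' w}
    (hx : firstArrowAux p = some x) : p = x.2.1.toPath.comp x.2.2 := by
  induction p with
  | nil => exact absurd hx (by simp [firstArrowAux])
  | cons q e ih =>
    cases q with
    | nil =>
      rw [show firstArrowAux (Quiver.Path.nil.cons e) = some ⟨_, e, Quiver.Path.nil⟩ from rfl]
        at hx
      obtain rfl := Option.some.inj hx
      rfl
    | cons r e' =>
      rw [show firstArrowAux ((r.cons e').cons e)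
          = (firstArrowAux (r.cons e')).map (fun y => ⟨y.1, y.2.1, y.2.2.cons e⟩) from rfl] at hx
      obtain ⟨y, hy, rfl⟩ := Option.map_eq_some_iff.mp hx
      show (r.cons e').cons e = y.2.1.toPath.comp (y.2.2.cons e)
      rw [Quiver.Path.comp_cons, ← ih hy]

/-- A path regarded as a morphism in the path category. -/
def pathHom {u w : Q} (p : Quiver.Path u w) :
    (show Paths Q from u) ⟶ (show Paths Q from w) := p

theorem firstArrowAux_comp_of_some {u : Q} {p : Quiver.Path v u}
    {x : Σ w' : Q, (v ⟶ w') × Quiver.Path w' u}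
    (hx : firstArrowAux p = some x) {w : Q} (q : Quiver.Path u w) :
    firstArrowAux (p.comp q) = some ⟨x.1, x.2.1, x.2.2.comp q⟩ := by
  rw [firstArrowAux_eq_some hx, Quiver.Path.comp_assoc, firstArrowAux_comp]

end Aux

section Rep

variable (Q : Type) [Quiver Q] (R : Type) [Ring R]
  (X : Paths Q ⥤ ModuleCat R) (v : Q)

/-- The product module `∏_{s(a)=v} X(t(a))`. -/
abbrev prodMod := (a : Σ w : Q, v ⟶ w) → X.obj ((Paths.of Q).obj a.1)

variable (m : prodMod Q R X v)

/-- The value along a path `p` of the "virtual element" at `v` with prescribed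
arrow-images `m`. -/
noncomputable def valFromV {w : Q} (p : Quiver.Path v w) : X.obj w :=
  match firstArrowAux p with
  | none => 0
  | some x => X.map (pathHom x.2.2) (m ⟨x.1, x.2.1⟩)

theorem valFromV_nil : valFromV Q R X v m (Quiver.Path.nil) = 0 := rfl

theorem valFromV_some {w : Q} {p : Quiver.Path v w}
    {x : Σ w' : Q, (v ⟶ w') × Quiver.Path w' w} (hx : firstArrowAux p = some x) :
    valFromV Q R X v m p = X.map (pathHom x.2.2) (m ⟨x.1, x.2.1⟩) := by
  show (match firstArrowAux p with
    | none => 0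
    | some x => X.map (pathHom x.2.2) (m ⟨x.1, x.2.1⟩)) = _
  rw [hx]

theorem valFromV_toPath {t : Q} (a : v ⟶ t) :
    valFromV Q R X v m a.toPath = m ⟨t, a⟩ := by
  have hx : firstArrowAux a.toPath = some ⟨t, a, Quiver.Path.nil⟩ :=
    firstArrowAux_comp a Quiver.Path.nil
  rw [valFromV_some Q R X v m hx]
  show X.map (𝟙 ((Paths.of Q).obj t)) _ = _
  rw [X.map_id]
  rfl

theorem valFromV_comp {u : Q} {p : Quiver.Path v u}
    {x : Σ w' : Q, (v ⟶ w') × Quiver.Path w' u} (hx : firstArrowAux p = some x)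
    {w : Q} (q : Quiver.Path u w) :
    valFromV Q R X v m (p.comp q) = X.map (pathHom q) (valFromV Q R X v m p) := by
  rw [valFromV_some Q R X v m (firstArrowAux_comp_of_some hx q), valFromV_some Q R X v m hx]
  show X.map (pathHom x.2.2 ≫ pathHom q) _ = _
  rw [X.map_comp]
  rfl

/-- The "trivial-path component" action of a path. -/
noncomputable def tmap (W : Type) [AddCommGroup W] [Module R W] :
    ∀ {w w' : Q}, Quiver.Path w w' → ((PLift (w = v) → W) →ₗ[R] (PLift (w' = v) → W))
  | _, _, .nil => LinearMap.id
  | _, _, .cons _ _ => 0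

theorem tmap_comp (W : Type) [AddCommGroup W] [Module R W] {w u w' : Q}
    (p : Quiver.Path w u) (q : Quiver.Path u w') :
    tmap Q R v W (p.comp q) = (tmap Q R v W q).comp (tmap Q R v W p) := by
  cases q with
  | nil => rfl
  | cons r e =>
    show (0 : (PLift (w = v) → W) →ₗ[R] _) = LinearMap.comp 0 _
    rw [LinearMap.zero_comp]

theorem tmap_natural (W W' : Type) [AddCommGroup W] [Module R W] [AddCommGroup W']
    [Module R W'] (φ : W →ₗ[R] W') {w w' : Q} (p : Quiver.Path w w') :
    (φ.compLeft (PLift (w' = v))).comp (tmap Q R v W p)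
      = (tmap Q R v W' p).comp (φ.compLeft (PLift (w = v))) := by
  cases p with
  | nil => rfl
  | cons r e =>
    apply LinearMap.ext
    intro g
    show φ.compLeft _ 0 = 0
    simp

/-- The correction term in the action of a path on the extension representation. -/
noncomputable def cmap {w w' : Q} (p : Quiver.Path w w') :
    (PLift (w = v) → R) →ₗ[R] X.obj w' :=
  letI := Classical.dec (w = v)
  if h : w = v then
    (LinearMap.toSpanSingleton R _
        (valFromV Q R X v m (h ▸ p : Quiver.Path v w'))).comp
      (LinearMap.proj (⟨h⟩ : PLift (w = v)))
  else 0

theorem cmap_of_ne {w w' : Q} (h : ¬ (w = v)) (p : Quiver.Path w w') :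
    cmap Q R X v m p = 0 :=
  dif_neg h

theorem cmap_of_eq {w' : Q} (p : Quiver.Path v w') :
    cmap Q R X v m p
      = (LinearMap.toSpanSingleton R _ (valFromV Q R X v m p)).comp
          (LinearMap.proj (⟨rfl⟩ : PLift (v = v))) :=
  dif_pos rfl

theorem cmap_nil {w : Q} : cmap Q R X v m (Quiver.Path.nil : Quiver.Path w w) = 0 := by
  by_cases h : v = w
  · subst h
    rw [cmap_of_eq, valFromV_nil]
    apply LinearMap.ext
    intro g
    simp
  · exact cmap_of_ne Q R X v m (fun hw => h hw.symm) _

theorem cmap_comp {w u w' : Q} (p : Quiver.Path w u) (q : Quiver.Path u w') :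
    cmap Q R X v m (p.comp q)
      = (((X.map (pathHom q)).hom : X.obj u →ₗ[R] X.obj w').comp (cmap Q R X v m p))
        + (cmap Q R X v m q).comp (tmap Q R v R p) := by
  by_cases h : v = w
  · subst h
    cases p with
    | nil =>
      rw [Quiver.Path.nil_comp, cmap_nil]
      apply LinearMap.ext
      intro g
      show cmap Q R X v m q g
        = X.map (pathHom q) 0 + cmap Q R X v m q (tmap Q R v R .nil g)
      rw [map_zero, zero_add]
      rfl
    | cons p₀ a =>
      obtain ⟨x, hx⟩ := Option.isSome_iff_exists.mp (firstArrowAux_cons_isSome p₀ a)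
      apply LinearMap.ext
      intro g
      rw [cmap_of_eq, cmap_of_eq]
      show g ⟨rfl⟩ • valFromV Q R X v m ((p₀.cons a).comp q)
        = X.map (pathHom q) (g ⟨rfl⟩ • valFromV Q R X v m (p₀.cons a))
          + cmap Q R X v m q (tmap Q R v R (p₀.cons a) g)
      rw [valFromV_comp Q R X v m hx q, map_smul]
      show _ = _ + cmap Q R X v m q 0
      rw [map_zero, add_zero]
  · apply LinearMap.ext
    intro g
    have hg : g = 0 := funext fun z => absurd z.down (fun hw => h hw.symm)
    subst hg
    rw [cmap_of_ne Q R X v m (fun hw => h hw.symm),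
      cmap_of_ne Q R X v m (fun hw => h hw.symm)]
    show (0 : X.obj w') = X.map (pathHom q) 0 + cmap Q R X v m q (tmap Q R v R p 0)
    rw [map_zero, map_zero, map_zero, add_zero]

/-- The big test representation: `X` extended by a copy of `R` at `v`, twisted by `m`. -/
noncomputable def tbFunc : Paths Q ⥤ ModuleCat R where
  obj w := ModuleCat.of R ((PLift (w = v) → R) × X.obj w)
  map {w w'} p := ModuleCat.ofHom <| LinearMap.prod
    ((tmap Q R v R p).comp (LinearMap.fst R (PLift (w = v) → R) (X.obj w)))
    ((X.map p).hom.comp (LinearMap.snd R (PLift (w = v) → R) (X.obj w)) + (cmap Q R X v m p).comp (LinearMap.fst R (PLift (w = v) → R) (X.obj w)))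
  map_id w := by
    apply ModuleCat.hom_ext
    apply LinearMap.ext
    rintro ⟨g, x⟩
    show (tmap Q R v R Quiver.Path.nil g,
      X.map (𝟙 w) x + cmap Q R X v m Quiver.Path.nil g) = (g, x)
    erw [X.map_id, cmap_nil]
    show (g, (𝟙 (X.obj w)) x + (0 : _ →ₗ[R] _) g) = (g, x)
    rw [LinearMap.zero_apply, add_zero, ModuleCat.id_apply]
  map_comp {w u w'} p q := by
    apply ModuleCat.hom_ext
    apply LinearMap.ext
    rintro ⟨g, x⟩
    show (tmap Q R v R (p.comp q) g, X.map (p ≫ q) x + cmap Q R X v m (p.comp q) g)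
      = (tmap Q R v R q (tmap Q R v R p g),
          X.map q (X.map p x + cmap Q R X v m p g) + cmap Q R X v m q (tmap Q R v R p g))
    erw [tmap_comp, cmap_comp, X.map_comp]
    show (_, (X.map (pathHom q)) ((X.map p) x)
        + ((X.map (pathHom q)) (cmap Q R X v m p g)
          + cmap Q R X v m q (tmap Q R v R p g))) = (_, _)
    rw [map_add, add_assoc]
    rfl

section Sub

variable (N : Submodule R (prodMod Q R X v))

/-- The left ideal `{r : R | r • m ∈ N}`. -/
noncomputable def idealIg : Submodule R R :=
  Submodule.comap (LinearMap.toSpanSingleton R (prodMod Q R X v) m) N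

/-- Inclusion of `Ig`-valued functions into `R`-valued functions. -/
noncomputable def inclIg (w : Q) :
    (PLift (w = v) → idealIg Q R X v m N) →ₗ[R] (PLift (w = v) → R) :=
  ((idealIg Q R X v m N).subtype).compLeft (PLift (w = v))

/-- The sub test representation. -/
noncomputable def taFunc : Paths Q ⥤ ModuleCat R where
  obj w := ModuleCat.of R ((PLift (w = v) → idealIg Q R X v m N) × X.obj w)
  map {w w'} p := ModuleCat.ofHom <| LinearMap.prod
    ((tmap Q R v (idealIg Q R X v m N) p).comp (LinearMap.fst R (PLift (w = v) → idealIg Q R X v m N) (X.obj w)))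
    ((X.map p).hom.comp (LinearMap.snd R (PLift (w = v) → idealIg Q R X v m N) (X.obj w))
      + ((cmap Q R X v m p).comp (inclIg Q R X v m N w)).comp (LinearMap.fst R (PLift (w = v) → idealIg Q R X v m N) (X.obj w)))
  map_id w := by
    apply ModuleCat.hom_ext
    apply LinearMap.ext
    rintro ⟨g, x⟩
    show (tmap Q R v _ Quiver.Path.nil g,
      X.map (𝟙 w) x + cmap Q R X v m Quiver.Path.nil (inclIg Q R X v m N w g)) = (g, x)
    erw [X.map_id, cmap_nil]
    show (g, (𝟙 (X.obj w)) x + (0 : _ →ₗ[R] _) _) = (g, x)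
    rw [LinearMap.zero_apply, add_zero, ModuleCat.id_apply]
  map_comp {w u w'} p q := by
    apply ModuleCat.hom_ext
    apply LinearMap.ext
    rintro ⟨g, x⟩
    have hnat := LinearMap.congr_fun
      (tmap_natural Q R v _ R ((idealIg Q R X v m N).subtype) p) g
    show (tmap Q R v _ (p.comp q) g,
        X.map (p ≫ q) x + cmap Q R X v m (p.comp q) (inclIg Q R X v m N w g))
      = (tmap Q R v _ q (tmap Q R v _ p g),
          X.map q (X.map p x + cmap Q R X v m p (inclIg Q R X v m N w g))
            + cmap Q R X v m q (inclIg Q R X v m N u (tmap Q R v _ p g)))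
    erw [tmap_comp, cmap_comp, X.map_comp]
    show (_, (X.map (pathHom q)) ((X.map p) x)
        + ((X.map (pathHom q)) (cmap Q R X v m p (inclIg Q R X v m N w g))
          + cmap Q R X v m q (tmap Q R v R p (inclIg Q R X v m N w g)))) = (_, _)
    rw [map_add, add_assoc]
    refine congrArg _ (congrArg _ (congrArg _ (congrArg _ ?_)))
    exact hnat.symm

/-- The inclusion of the sub test representation into the big one. -/
noncomputable def jmap : taFunc Q R X v m N ⟶ tbFunc Q R X v m where
  app w := ModuleCat.ofHom <| LinearMap.prod
    ((inclIg Q R X v m N w).comp (LinearMap.fst R (PLift (w = v) → idealIg Q R X v m N) (X.obj w))) (LinearMap.snd R (PLift (w = v) → idealIg Q R X v m N) (X.obj w))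
  naturality w w' p := by
    apply ModuleCat.hom_ext
    apply LinearMap.ext
    rintro ⟨g, x⟩
    have hnat := LinearMap.congr_fun
      (tmap_natural Q R v _ R ((idealIg Q R X v m N).subtype) p) g
    show (inclIg Q R X v m N w' (tmap Q R v _ p g),
        X.map p x + cmap Q R X v m p (inclIg Q R X v m N w g))
      = (tmap Q R v R p (inclIg Q R X v m N w g),
        X.map p x + cmap Q R X v m p (inclIg Q R X v m N w g))
    exact congrArg (fun z => (z, _)) hnat

instance jmap_mono : Mono (jmap Q R X v m N) := by
  haveI : ∀ w : Paths Q, Mono ((jmap Q R X v m N).app w) := by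
    intro w
    rw [ModuleCat.mono_iff_injective]
    rintro ⟨g, x⟩ ⟨g', x'⟩ h
    obtain ⟨h1, h2⟩ := Prod.mk.injEq _ _ _ _ ▸ h
    refine Prod.ext ?_ h2
    funext z
    exact Subtype.ext (congrFun h1 z)
  exact NatTrans.mono_of_mono_app _

variable (s : ↥N →ₗ[R] X.obj ((Paths.of Q).obj v))

/-- The map `Ig → N`, `r ↦ r • m`. -/
noncomputable def restrIg : ↥(idealIg Q R X v m N) →ₗ[R] ↥N :=
  (LinearMap.toSpanSingleton R (prodMod Q R X v) m).restrict (fun _ hx => hx)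

/-- The `v`-component correction of the evaluation map. -/
noncomputable def dmap (w : Q) :
    (PLift (w = v) → idealIg Q R X v m N) →ₗ[R] X.obj w :=
  letI := Classical.dec (w = v)
  if h : w = v then
    ((X.map (eqToHom (show (Paths.of Q).obj v = w from h.symm))).hom :
        X.obj ((Paths.of Q).obj v) →ₗ[R] X.obj w).comp
      ((s.comp (restrIg Q R X v m N)).comp
        (LinearMap.proj (⟨h⟩ : PLift (w = v))))
  else 0

theorem dmap_of_ne {w : Q} (h : ¬ (w = v)) : dmap Q R X v m N s w = 0 :=
  dif_neg h

theorem dmap_of_eq (g : PLift (v = v) → idealIg Q R X v m N) :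
    dmap Q R X v m N s v g = s (restrIg Q R X v m N (g ⟨rfl⟩)) := by
  rw [show dmap Q R X v m N s v
      = ((X.map (eqToHom (show (Paths.of Q).obj v = v from rfl))).hom :
          X.obj ((Paths.of Q).obj v) →ₗ[R] X.obj v).comp
        ((s.comp (restrIg Q R X v m N)).comp
          (LinearMap.proj (⟨rfl⟩ : PLift (v = v)))) from dif_pos rfl]
  show X.map (eqToHom _) _ = _
  erw [eqToHom_refl, X.map_id]
  rfl

theorem restrIg_coe (z : ↥(idealIg Q R X v m N)) :
    ((restrIg Q R X v m N z : ↥N) : prodMod Q R X v) = (z : R) • m := rfl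

theorem map_section_eq (hs : ∀ n : ↥N, canonicalSourceMap Q R X v (s n)
      = (n : prodMod Q R X v))
    (n : ↥N) (r : R) (hn : (n : prodMod Q R X v) = r • m)
    {u : Q} (p : Quiver.Path v u)
    {x : Σ w' : Q, (v ⟶ w') × Quiver.Path w' u} (hx : firstArrowAux p = some x) :
    X.map (pathHom p) (s n) = r • valFromV Q R X v m p := by
  have hdec : p = x.2.1.toPath.comp x.2.2 := firstArrowAux_eq_some hx
  have h1 : X.map (pathHom x.2.1.toPath) (s n) = r • m ⟨x.1, x.2.1⟩ := by
    have h2 := congrFun (hs n) ⟨x.1, x.2.1⟩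
    simp only [canonicalSourceMap, LinearMap.pi_apply] at h2
    show X.map ((Paths.of Q).map x.2.1) (s n) = r • m ⟨x.1, x.2.1⟩
    rw [h2, hn]
    simp
  rw [hdec]
  have hcomp : X.map (pathHom (x.2.1.toPath.comp x.2.2))
      = X.map (pathHom x.2.1.toPath) ≫ X.map (pathHom x.2.2) := X.map_comp _ _
  erw [hcomp, ModuleCat.comp_apply, h1, map_smul,
    valFromV_some Q R X v m (firstArrowAux_comp x.2.1 x.2.2)]

theorem dmap_natural (hs : ∀ n : ↥N, canonicalSourceMap Q R X v (s n)
      = (n : prodMod Q R X v))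
    {w w' : Q} (p : Quiver.Path w w') (g : PLift (w = v) → idealIg Q R X v m N) :
    X.map (pathHom p) (dmap Q R X v m N s w g)
      = cmap Q R X v m p (inclIg Q R X v m N w g)
        + dmap Q R X v m N s w' (tmap Q R v _ p g) := by
  by_cases h : v = w
  · subst h
    cases p with
    | nil =>
      rw [cmap_nil, LinearMap.zero_apply, zero_add]
      rw [show X.map (pathHom (Quiver.Path.nil : Quiver.Path v v))
          = 𝟙 (X.obj ((Paths.of Q).obj v)) from X.map_id _]
      rfl
    | cons p₀ a =>
      obtain ⟨x', hx'⟩ := Option.isSome_iff_exists.mp (firstArrowAux_cons_isSome p₀ a)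
      rw [cmap_of_eq, dmap_of_eq]
      show X.map (pathHom (p₀.cons a)) (s (restrIg Q R X v m N (g ⟨rfl⟩)))
        = ((inclIg Q R X v m N v g ⟨rfl⟩)) • valFromV Q R X v m (p₀.cons a)
          + dmap Q R X v m N s w' (tmap Q R v _ (p₀.cons a) g)
      rw [map_section_eq Q R X v m N s hs _ ((g ⟨rfl⟩ : idealIg Q R X v m N) : R)
        (restrIg_coe Q R X v m N _) (p₀.cons a) hx']
      show _ = _ + dmap Q R X v m N s w' 0
      rw [map_zero, add_zero]
      rfl
  · have hg : g = 0 := funext fun z => absurd z.down (fun hw => h hw.symm)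
    subst hg
    rw [dmap_of_ne Q R X v m N s (fun hw => h hw.symm)]
    show X.map (pathHom p) ((0 : _ →ₗ[R] _) 0)
      = cmap Q R X v m p (inclIg Q R X v m N w 0)
        + dmap Q R X v m N s w' (tmap Q R v _ p 0)
    rw [map_zero, map_zero, map_zero, map_zero]
    simp

/-- The evaluation morphism from the sub test representation to `X`. -/
noncomputable def umap (hs : ∀ n : ↥N, canonicalSourceMap Q R X v (s n)
      = (n : prodMod Q R X v)) : taFunc Q R X v m N ⟶ X where
  app w := ModuleCat.ofHom <| LinearMap.snd R _ _ + (dmap Q R X v m N s w).comp (LinearMap.fst R _ _)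
  naturality w w' p := by
    apply ModuleCat.hom_ext
    apply LinearMap.ext
    rintro ⟨g, x⟩
    show X.map p x + cmap Q R X v m p (inclIg Q R X v m N w g)
        + dmap Q R X v m N s w' (tmap Q R v _ p g)
      = X.map p (x + dmap Q R X v m N s w g)
    rw [map_add, add_assoc]
    refine congrArg _ ?_
    exact (dmap_natural Q R X v m N s hs p g).symm

theorem exists_preimage_compat (hX : CategoryTheory.Injective X)
    (N : Submodule R (prodMod Q R X v)) (s : ↥N →ₗ[R] X.obj ((Paths.of Q).obj v))
    (hs : ∀ n : ↥N, canonicalSourceMap Q R X v (s n) = (n : prodMod Q R X v))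
    (m : prodMod Q R X v) :
    ∃ x : X.obj ((Paths.of Q).obj v), canonicalSourceMap Q R X v x = m ∧
      ∀ (r : R) (h : r • m ∈ N), r • x = s ⟨r • m, h⟩ := by
  haveI := hX
  set ψ : tbFunc Q R X v m ⟶ X :=
    Injective.factorThru (umap Q R X v m N s hs) (jmap Q R X v m N) with hψ
  have hfact : jmap Q R X v m N ≫ ψ = umap Q R X v m N s hs :=
    Injective.comp_factorThru _ _
  have happ : ∀ (w : Paths Q) (z : (taFunc Q R X v m N).obj w),
      ψ.app w ((jmap Q R X v m N).app w z) = (umap Q R X v m N s hs).app w z := by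
    intro w z
    have h1 := congrArg (fun η : taFunc Q R X v m N ⟶ X => η.app w) hfact
    have h2 := ConcreteCategory.congr_hom (show ((jmap Q R X v m N).app w) ≫ (ψ.app w)
      = (umap Q R X v m N s hs).app w from h1) z
    exact h2
  refine ⟨ψ.app ((Paths.of Q).obj v) ((fun _ => (1 : R)), 0), ?_, ?_⟩
  · funext a
    obtain ⟨t, e⟩ := a
    show X.map ((Paths.of Q).map e) (ψ.app ((Paths.of Q).obj v) ((fun _ => (1 : R)), 0)) = m ⟨t, e⟩
    have hnat := ConcreteCategory.congr_hom
      (show ((tbFunc Q R X v m).map ((Paths.of Q).map e)) ≫ (ψ.app ((Paths.of Q).obj t))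
          = (ψ.app ((Paths.of Q).obj v)) ≫ (X.map ((Paths.of Q).map e))
        from ψ.naturality ((Paths.of Q).map e)) ((fun _ => (1 : R)), 0)
    erw [ModuleCat.comp_apply, ModuleCat.comp_apply] at hnat
    refine hnat.symm.trans ?_
    have hz : (tbFunc Q R X v m).map ((Paths.of Q).map e) ((fun _ => (1 : R)), 0)
        = ((0 : PLift ((t : Q) = v) → R), m ⟨t, e⟩) := by
      have hval : valFromV Q R X v m ((Paths.of Q).map e) = m ⟨t, e⟩ :=
        valFromV_toPath Q R X v m e
      refine Prod.ext rfl ?_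
      show X.map ((Paths.of Q).map e) 0 + cmap Q R X v m ((Paths.of Q).map e) (fun _ => (1 : R))
        = m ⟨t, e⟩
      erw [map_zero, zero_add, cmap_of_eq]
      show (1 : R) • valFromV Q R X v m ((Paths.of Q).map e) = m ⟨t, e⟩
      rw [one_smul, hval]
    rw [hz]
    have hjz : ((jmap Q R X v m N).app ((Paths.of Q).obj t))
        ((0 : PLift ((t : Q) = v) → idealIg Q R X v m N), m ⟨t, e⟩)
        = ((0 : PLift ((t : Q) = v) → R), m ⟨t, e⟩) := by
      refine Prod.ext ?_ rfl
      show inclIg Q R X v m N t 0 = 0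
      exact map_zero _
    erw [← hjz, happ]
    show m ⟨t, e⟩ + dmap Q R X v m N s ((Paths.of Q).obj t) 0 = m ⟨t, e⟩
    rw [map_zero, add_zero]
  · intro r h
    have hIg : r ∈ idealIg Q R X v m N := by
      show LinearMap.toSpanSingleton R (prodMod Q R X v) m r ∈ N
      rw [LinearMap.toSpanSingleton_apply]
      exact h
    have hsm : r • (((fun _ => (1 : R)), 0) : ↑((tbFunc Q R X v m).obj ((Paths.of Q).obj v)))
        = ((fun _ => r), 0) := by
      refine Prod.ext ?_ (smul_zero r)
      funext z
      show r • (1 : R) = r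
      rw [smul_eq_mul, mul_one]
    erw [← map_smul, hsm]
    have hjz : ((jmap Q R X v m N).app ((Paths.of Q).obj v))
        ((fun _ => (⟨r, hIg⟩ : idealIg Q R X v m N)), 0)
        = ((fun _ => r), (0 : X.obj ((Paths.of Q).obj v))) := rfl
    erw [← hjz, happ]
    show (0 : X.obj v) + dmap Q R X v m N s v (fun _ => (⟨r, hIg⟩ : _)) = _
    rw [zero_add, dmap_of_eq]
    refine congrArg s (Subtype.ext ?_)
    exact restrIg_coe Q R X v m N _

end Sub

end Rep

/-- If `X` is an injective object of the category of representations of a quiver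
`Q` by left `R`-modules, then for every vertex `v` the canonical morphism
`X(v) → ∏_{s(a)=v} X(t(a))` is a split epimorphism of `R`-modules. -/
theorem canonicalSourceMap_split_epi_of_injective
    (Q : Type) [Quiver Q] (R : Type) [Ring R]
    (X : Paths Q ⥤ ModuleCat R) (hX : CategoryTheory.Injective X) (v : Q) :
    ∃ s : ((a : Σ w : Q, v ⟶ w) → X.obj ((Paths.of Q).obj a.1)) →ₗ[R] X.obj ((Paths.of Q).obj v),
      (canonicalSourceMap Q R X v) ∘ₗ s = LinearMap.id := by
  classical
  set S : Set ((prodMod Q R X v) →ₗ.[R] X.obj ((Paths.of Q).obj v)) :=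
    {p | ∀ z : p.domain, canonicalSourceMap Q R X v (p z) = (z : prodMod Q R X v)} with hS
  have hbot : ((0 : prodMod Q R X v →ₗ[R] X.obj ((Paths.of Q).obj v)).toPMap ⊥) ∈ S := by
    intro z
    have hz0 : (z : prodMod Q R X v) = 0 := (Submodule.mem_bot R).mp z.2
    erw [LinearMap.toPMap_apply, LinearMap.zero_apply, map_zero, hz0]
  have hchain : ∀ c ⊆ S, IsChain (· ≤ ·) c → ∀ y ∈ c,
      ∃ ub ∈ S, ∀ z ∈ c, z ≤ ub := by
    intro c hcS hc y hy
    have hcd : DirectedOn (· ≤ ·) c := hc.directedOn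
    refine ⟨LinearPMap.sSup c hcd, ?_, fun z hz => LinearPMap.le_sSup hcd hz⟩
    intro z
    have hdir : DirectedOn (· ≤ ·) (LinearPMap.domain '' c) :=
      directedOn_image.2 (hcd.mono @(LinearPMap.domain_mono.monotone))
    have hzmem : (z : prodMod Q R X v) ∈ sSup (LinearPMap.domain '' c) := z.2
    obtain ⟨dl, ⟨l, hlc, rfl⟩, hzl⟩ :=
      (Submodule.mem_sSup_of_directed ⟨_, Set.mem_image_of_mem _ hy⟩ hdir).1 hzmem
    have hagree : l ⟨(z : prodMod Q R X v), hzl⟩ = (LinearPMap.sSup c hcd) z :=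
      (LinearPMap.le_sSup hcd hlc).2 rfl
    rw [← hagree]
    exact hcS hlc ⟨(z : prodMod Q R X v), hzl⟩
  obtain ⟨p, -, hpmax⟩ := zorn_le_nonempty₀ S hchain _ hbot
  have hpS : p ∈ S := hpmax.1
  have hdom : p.domain = ⊤ := by
    rw [Submodule.eq_top_iff']
    intro m
    by_contra hm
    obtain ⟨x, hx1, hx2⟩ :=
      exists_preimage_compat Q R X v hX p.domain p.toFun hpS m
    -- build the one-step extension
    set j : (↥p.domain × R) →ₗ[R] prodMod Q R X v :=
      (p.domain.subtype).coprod (LinearMap.toSpanSingleton R _ m) with hj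
    set F : (↥p.domain × R) →ₗ[R] X.obj ((Paths.of Q).obj v) :=
      (p.toFun.comp (LinearMap.fst R _ _))
        + ((LinearMap.toSpanSingleton R _ x).comp (LinearMap.snd R _ _)) with hF
    have hFapp : ∀ (n : ↥p.domain) (r : R), F (n, r) = p.toFun n + r • x := by
      intro n r
      simp [hF, LinearMap.toSpanSingleton_apply]
    have hjapp : ∀ (n : ↥p.domain) (r : R), j (n, r) = (n : prodMod Q R X v) + r • m := by
      intro n r
      simp [hj, LinearMap.toSpanSingleton_apply]
    have hker : LinearMap.ker j ≤ LinearMap.ker F := by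
      rintro ⟨n, r⟩ hnr
      rw [LinearMap.mem_ker] at hnr ⊢
      rw [hjapp] at hnr
      have hrm : r • m ∈ p.domain := by
        have hneg : r • m = -(n : prodMod Q R X v) := eq_neg_of_add_eq_zero_right hnr
        rw [hneg]
        exact neg_mem n.2
      have h2 := hx2 r hrm
      rw [hFapp, h2, ← map_add]
      have hzero : (n + ⟨r • m, hrm⟩ : ↥p.domain) = 0 := by
        apply Subtype.ext
        simpa using hnr
      rw [hzero, map_zero]
    have hrange : LinearMap.range j = p.domain ⊔ R ∙ m := by
      rw [hj, LinearMap.range_coprod, Submodule.range_subtype,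
        ← LinearMap.span_singleton_eq_range]
    set g0 : ((↥p.domain × R) ⧸ LinearMap.ker j) →ₗ[R] X.obj ((Paths.of Q).obj v) :=
      Submodule.liftQ (LinearMap.ker j) F hker with hg0
    set eq1 : ((↥p.domain × R) ⧸ LinearMap.ker j) ≃ₗ[R] ↥(LinearMap.range j) :=
      LinearMap.quotKerEquivRange j with heq1
    set eqOf : ↥(p.domain ⊔ R ∙ m) ≃ₗ[R] ↥(LinearMap.range j) :=
      LinearEquiv.ofEq _ _ hrange.symm with heqOf
    set p' : (prodMod Q R X v) →ₗ.[R] X.obj ((Paths.of Q).obj v) :=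
      ⟨p.domain ⊔ R ∙ m,
        g0 ∘ₗ (eq1.symm.toLinearMap ∘ₗ eqOf.toLinearMap)⟩ with hp'
    have hp'eval : ∀ (n : ↥p.domain) (r : R)
        (hmem : (n : prodMod Q R X v) + r • m ∈ p.domain ⊔ R ∙ m),
        p'.toFun ⟨(n : prodMod Q R X v) + r • m, hmem⟩ = p.toFun n + r • x := by
      intro n r hmem
      have h1 : eqOf ⟨(n : prodMod Q R X v) + r • m, hmem⟩
          = ⟨j (n, r), LinearMap.mem_range_self _ _⟩ := by
        apply Subtype.ext
        show (n : prodMod Q R X v) + r • m = j (n, r)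
        exact (hjapp n r).symm
      have h2 : eq1.symm ⟨j (n, r), LinearMap.mem_range_self _ _⟩
          = Submodule.Quotient.mk (n, r) := by
        rw [LinearEquiv.symm_apply_eq]
        exact Subtype.ext (LinearMap.quotKerEquivRange_apply_mk j _).symm
      show g0 (eq1.symm (eqOf ⟨(n : prodMod Q R X v) + r • m, hmem⟩)) = _
      rw [h1, h2, hg0, Submodule.liftQ_apply, hFapp]
    have hle : p ≤ p' := by
      refine ⟨le_sup_left, ?_⟩
      rintro z y hzy
      have hmem : (z : prodMod Q R X v) + (0 : R) • m ∈ p.domain ⊔ R ∙ m := by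
        rw [zero_smul, add_zero]
        exact Submodule.mem_sup_left z.2
      have hy : y = ⟨(z : prodMod Q R X v) + (0 : R) • m, hmem⟩ := by
        apply Subtype.ext
        rw [← hzy]
        simp
      rw [hy]
      show p z = p'.toFun _
      rw [hp'eval z 0 hmem, zero_smul, add_zero]
      rfl
    have hp'S : p' ∈ S := by
      intro z
      obtain ⟨a, ha, b, hb, hab⟩ := Submodule.mem_sup.mp z.2
      obtain ⟨r, rfl⟩ := Submodule.mem_span_singleton.mp hb
      have hmem2 : ((⟨a, ha⟩ : ↥p.domain) : prodMod Q R X v) + r • m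
          ∈ p.domain ⊔ R ∙ m := by
        show a + r • m ∈ _
        rw [hab]
        exact z.2
      have hz : z = ⟨((⟨a, ha⟩ : ↥p.domain) : prodMod Q R X v) + r • m, hmem2⟩ := by
        apply Subtype.ext
        exact hab.symm
      rw [hz]
      show canonicalSourceMap Q R X v (p'.toFun _) = _
      rw [hp'eval ⟨a, ha⟩ r _, map_add, map_smul, hx1, LinearPMap.toFun_eq_coe,
        hpS ⟨a, ha⟩]
    have hp'le : p' ≤ p := hpmax.2 hp'S hle
    have : m ∈ p.domain := hp'le.1 (Submodule.mem_sup_right (Submodule.mem_span_singleton_self m))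
    exact hm this
  refine ⟨p.toFun ∘ₗ (LinearEquiv.ofTop p.domain hdom).symm.toLinearMap, ?_⟩
  apply LinearMap.ext
  intro z
  show canonicalSourceMap Q R X v
    (p.toFun ((LinearEquiv.ofTop p.domain hdom).symm z)) = z
  rw [LinearPMap.toFun_eq_coe, hpS ((LinearEquiv.ofTop p.domain hdom).symm z)]
  simp
end

section
/- Let p = ··· a₃ a₂ a₁ be an infinite path in a tree T starting at the root, with associated vertex at infinity w. For any injective left R-module E, the representation e_*^w(E) of T, which assigns E to each vertex lying on p with identity maps along the arrows a_i, and 0 to all other vertices, is an injective object of (T, R-Mod). -/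
open CategoryTheory CategoryTheory.Limits

namespace EStarAux

variable {T : Type} [Quiver T] (vtx : ℕ → T) (arr : ∀ n : ℕ, vtx n ⟶ vtx (n + 1))

/-- The path from `vtx 0` to `vtx n` along the given arrows. -/
def arrPath : ∀ n : ℕ, Quiver.Path (vtx 0) (vtx n)
  | 0 => Quiver.Path.nil
  | n + 1 => (arrPath n).cons (arr n)

lemma arrPath_length (n : ℕ) : (arrPath vtx arr n).length = n := by
  induction n with
  | zero => rfl
  | succ n ih => simp [arrPath, ih]

variable {R : Type} [Ring R]

/-- One step of the chain. -/
def step (W : Paths T ⥤ ModuleCat R) (k : ℕ) :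
    W.obj ((Paths.of T).obj (vtx k)) →ₗ[R] W.obj ((Paths.of T).obj (vtx (k + 1))) :=
  (W.map ((Paths.of T).map (arr k))).hom

/-- Transition maps of the directed system. -/
def chain (W : Paths T ⥤ ModuleCat R) (n m : ℕ) (h : n ≤ m) :
    W.obj ((Paths.of T).obj (vtx n)) →ₗ[R] W.obj ((Paths.of T).obj (vtx m)) :=
  Nat.leRecOn h (fun {k} g => (step vtx arr W k).comp g) LinearMap.id

lemma chain_self (W : Paths T ⥤ ModuleCat R) (n : ℕ) (h : n ≤ n) :
    chain vtx arr W n n h = LinearMap.id :=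
  Nat.leRecOn_self _

lemma chain_succ (W : Paths T ⥤ ModuleCat R) (n m : ℕ) (h1 : n ≤ m) (h2 : n ≤ m + 1) :
    chain vtx arr W n (m + 1) h2 = (step vtx arr W m).comp (chain vtx arr W n m h1) :=
  Nat.leRecOn_succ h1 _

lemma step_chain (W : Paths T ⥤ ModuleCat R) (n : ℕ) (x : W.obj ((Paths.of T).obj (vtx n))) :
    step vtx arr W n x = chain vtx arr W n (n + 1) (Nat.le_succ n) x := by
  rw [chain_succ vtx arr W n n le_rfl, LinearMap.comp_apply, chain_self]
  rfl

lemma chain_map_map (W : Paths T ⥤ ModuleCat R) {i j k : ℕ} (hij : i ≤ j) (hjk : j ≤ k)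
    (x : W.obj ((Paths.of T).obj (vtx i))) :
    chain vtx arr W j k hjk (chain vtx arr W i j hij x) =
      chain vtx arr W i k (hij.trans hjk) x := by
  induction k, hjk using Nat.le_induction with
  | base => rw [chain_self]; rfl
  | succ k hk ih =>
      rw [chain_succ vtx arr W j k hk, chain_succ vtx arr W i k (hij.trans hk)]
      simp only [LinearMap.comp_apply]
      rw [ih]

lemma chain_nat {W W' : Paths T ⥤ ModuleCat R} (φ : W ⟶ W') {i j : ℕ} (h : i ≤ j)
    (x : W.obj ((Paths.of T).obj (vtx i))) :
    φ.app ((Paths.of T).obj (vtx j)) (chain vtx arr W i j h x) =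
      chain vtx arr W' i j h (φ.app ((Paths.of T).obj (vtx i)) x) := by
  induction j, h using Nat.le_induction with
  | base => rw [chain_self, chain_self]; rfl
  | succ j hj ih =>
      rw [chain_succ vtx arr W i j hj, chain_succ vtx arr W' i j hj]
      simp only [LinearMap.comp_apply]
      rw [← ih]
      have h5 := φ.naturality ((Paths.of T).map (arr j))
      have h7 := congrArg
        (fun (t : W.obj ((Paths.of T).obj (vtx j)) ⟶ W'.obj ((Paths.of T).obj (vtx (j + 1)))) =>
          t (chain vtx arr W i j hj x)) h5
      simp only [step]
      exact h7

lemma chain_directedSystem (W : Paths T ⥤ ModuleCat R) :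
    DirectedSystem (fun n => W.obj ((Paths.of T).obj (vtx n)))
      (fun i j h => chain vtx arr W i j h) := by
  constructor
  · intro i x
    rw [chain_self]; rfl
  · intro i j k hij hjk x
    exact chain_map_map vtx arr W hij hjk x


open Classical in
/-- Components of the candidate natural transformation. -/
noncomputable def hcAux (Z X : Paths T ⥤ ModuleCat R)
    (hv : ∀ n : ℕ, Z.obj ((Paths.of T).obj (vtx n)) ⟶ X.obj ((Paths.of T).obj (vtx n))) (u : T) :
    Z.obj ((Paths.of T).obj u) ⟶ X.obj ((Paths.of T).obj u) :=
  if hu : ∃ n, u = vtx n then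
    eqToHom (congrArg (fun t => Z.obj ((Paths.of T).obj t)) hu.choose_spec) ≫ hv hu.choose ≫
      eqToHom (congrArg (fun t => X.obj ((Paths.of T).obj t)) hu.choose_spec).symm
  else 0

lemma hcAux_vtx (Z X : Paths T ⥤ ModuleCat R)
    (hv : ∀ n : ℕ, Z.obj ((Paths.of T).obj (vtx n)) ⟶ X.obj ((Paths.of T).obj (vtx n)))
    (vinj : Function.Injective vtx) (n : ℕ) :
    hcAux vtx Z X hv (vtx n) = hv n := by
  have gen : ∀ (k : ℕ) (_ : k = n)
      (e1 : Z.obj ((Paths.of T).obj (vtx n)) = Z.obj ((Paths.of T).obj (vtx k)))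
      (e2 : X.obj ((Paths.of T).obj (vtx k)) = X.obj ((Paths.of T).obj (vtx n))),
      eqToHom e1 ≫ hv k ≫ eqToHom e2 = hv n := by
    rintro k rfl e1 e2
    simp
  unfold hcAux
  rw [dif_pos (⟨n, rfl⟩ : ∃ k, vtx n = vtx k)]
  exact gen _ ((vinj (Exists.choose_spec (⟨n, rfl⟩ : ∃ k, vtx n = vtx k))).symm) _ _

lemma hcAux_zero (Z X : Paths T ⥤ ModuleCat R)
    (hv : ∀ n : ℕ, Z.obj ((Paths.of T).obj (vtx n)) ⟶ X.obj ((Paths.of T).obj (vtx n)))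
    (u : T) (hu : ∀ n, u ≠ vtx n) :
    hcAux vtx Z X hv u = 0 := by
  unfold hcAux
  rw [dif_neg]
  rintro ⟨n, hn⟩
  exact hu n hn

/-- Natural transformations between functors out of a path category from arrowwise data. -/
def pathsNatTrans {D : Type*} [Category D] (F G : Paths T ⥤ D)
    (app : ∀ u : T, F.obj ((Paths.of T).obj u) ⟶ G.obj ((Paths.of T).obj u))
    (comm : ∀ {b c : T} (a : b ⟶ c),
      F.map ((Paths.of T).map a) ≫ app c = app b ≫ G.map ((Paths.of T).map a)) :
    F ⟶ G where
  app u := app u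
  naturality {u v} p := by
    refine Paths.induction (V := T)
      (P := fun {a b} f => F.map f ≫ app b = app a ≫ G.map f) ?_ ?_ p
    · intro v'
      exact ((congrArg (· ≫ _) (F.map_id _)).trans (Category.id_comp _)).trans
        ((Category.comp_id _).symm.trans (congrArg _ (G.map_id _).symm))
    · intro a' b' c' p' q hp'
      erw [F.map_comp, G.map_comp, Category.assoc, comm q, ← Category.assoc, hp',
        Category.assoc]
      rfl

end EStarAux

open EStarAux

/-- Let `T` be a tree with root `r` (every vertex admits a unique path from `r`),
and let `p = ⋯ a₃ a₂ a₁` be an infinite path starting at the root, given by vertices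
`vtx 0 = r, vtx 1, vtx 2, …` and arrows `arr n : vtx n ⟶ vtx (n+1)`, with associated vertex at
infinity `w`.  For an injective left `R`-module `E`, the representation `e_*^w(E)` of `T` —
the one assigning `E` to each vertex lying on `p`, with identity maps along the arrows `aᵢ`,
and `0` to all other vertices — is an injective object of `(T, R-Mod)`.  (The representation
is encoded as a functor `X` equipped with compatible isomorphisms `X(vtx n) ≅ E` carrying the
structure maps along the arrows of `p` to the identity of `E`, and whose value at every vertex
not on `p` is zero.) -/
theorem eStar_at_infinity_injective
    (T : Type) [Quiver T] (r : T)
    (htree : ∀ w : T, ∃! _p : ((Paths.of T).obj r ⟶ (Paths.of T).obj w), True)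
    (R : Type) [Ring R] (E : Type) [AddCommGroup E] [Module R E]
    (hEinj : Module.Injective R E)
    (vtx : ℕ → T) (hv0 : vtx 0 = r) (arr : ∀ n : ℕ, vtx n ⟶ vtx (n + 1))
    (X : Paths T ⥤ ModuleCat R)
    (iso : ∀ n : ℕ, X.obj ((Paths.of T).obj (vtx n)) ≅ ModuleCat.of R E)
    (hiso : ∀ n : ℕ, X.map ((Paths.of T).map (arr n)) ≫ (iso (n + 1)).hom = (iso n).hom)
    (hzero : ∀ u : T, (∀ n : ℕ, u ≠ vtx n) → IsZero (X.obj ((Paths.of T).obj u))) :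
    CategoryTheory.Injective X := by
  classical
  subst hv0
  -- injectivity of `vtx`
  have cast_len : ∀ {a b : T} (h : a = b) (p : Quiver.Path (vtx 0) a),
      (h ▸ p : Quiver.Path (vtx 0) b).length = p.length := by
    rintro a b rfl p; rfl
  have vinj : Function.Injective vtx := by
    intro n m hnm
    have h1 : (hnm ▸ arrPath vtx arr n : Quiver.Path (vtx 0) (vtx m)) = arrPath vtx arr m :=
      (htree (vtx m)).unique trivial trivial
    have h2 := congrArg Quiver.Path.length h1
    rwa [cast_len hnm, arrPath_length, arrPath_length] at h2
  -- every arrow into a path vertex comes from the path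
  have arrow_into : ∀ {u : T} {m : ℕ} (a : u ⟶ vtx m),
      ∃ k, ∃ _ : m = k + 1, ∃ _ : u = vtx k, HEq a (arr k) := by
    intro u m a
    obtain ⟨p, -⟩ := (htree u).exists
    have key : Quiver.Path.cons p a = arrPath vtx arr m :=
      (htree (vtx m)).unique trivial trivial
    cases m with
    | zero =>
        exfalso
        have h3 := congrArg Quiver.Path.length key
        exact Nat.succ_ne_zero _ h3
    | succ k =>
        have key' : Quiver.Path.cons p a = Quiver.Path.cons (arrPath vtx arr k) (arr k) := key
        injection key' with h1 h2 h3 h4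
        exact ⟨k, rfl, h1, h4⟩
  refine ⟨?_⟩
  intro Y Z g f hf
  have finj : ∀ u : Paths T, Function.Injective (f.app u) := fun u =>
    (ModuleCat.mono_iff_injective _).mp (((NatTrans.mono_iff_mono_app f).mp hf) u)
  -- elementwise versions of `hiso`
  have hisoElt : ∀ (n : ℕ) (y : X.obj ((Paths.of T).obj (vtx n))),
      (iso (n + 1)).hom (step vtx arr X n y) = (iso n).hom y := by
    intro n y
    have h7 := congrArg
      (fun (t : X.obj ((Paths.of T).obj (vtx n)) ⟶ ModuleCat.of R E) => t y) (hiso n)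
    simp only [step]
    exact h7
  have invhom : ∀ (n : ℕ) (y : E), (iso n).hom ((iso n).inv y) = y := by
    intro n y
    have h7 := congrArg
      (fun (t : ModuleCat.of R E ⟶ ModuleCat.of R E) => t y) (iso n).inv_hom_id
    exact h7
  have hominv : ∀ (n : ℕ) (y : X.obj ((Paths.of T).obj (vtx n))),
      (iso n).inv ((iso n).hom y) = y := by
    intro n y
    have h7 := congrArg
      (fun (t : X.obj ((Paths.of T).obj (vtx n)) ⟶ X.obj ((Paths.of T).obj (vtx n))) => t y)
      (iso n).hom_inv_id
    exact h7
  have iso_chain : ∀ {i j : ℕ} (hij : i ≤ j) (x : X.obj ((Paths.of T).obj (vtx i))),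
      (iso j).hom (chain vtx arr X i j hij x) = (iso i).hom x := by
    intro i j hij x
    induction j, hij using Nat.le_induction with
    | base => rw [chain_self]; rfl
    | succ j hj ih =>
        rw [chain_succ vtx arr X i j hj, LinearMap.comp_apply, hisoElt j, ih]
  -- the key construction via direct limits
  haveI hDY := chain_directedSystem vtx arr Y
  haveI hDZ := chain_directedSystem vtx arr Z
  have key : ∃ hv : ∀ n : ℕ, (Z.obj ((Paths.of T).obj (vtx n)) ⟶ X.obj ((Paths.of T).obj (vtx n))),
      (∀ n, Z.map ((Paths.of T).map (arr n)) ≫ hv (n + 1) = hv n ≫ X.map ((Paths.of T).map (arr n))) ∧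
      (∀ n, f.app ((Paths.of T).obj (vtx n)) ≫ hv n = g.app ((Paths.of T).obj (vtx n))) := by
    set ofY := fun n => Module.DirectLimit.of R ℕ (fun k => Y.obj ((Paths.of T).obj (vtx k)))
      (fun i j h => chain vtx arr Y i j h) n with hofY
    set ofZ := fun n => Module.DirectLimit.of R ℕ (fun k => Z.obj ((Paths.of T).obj (vtx k)))
      (fun i j h => chain vtx arr Z i j h) n with hofZ
    -- the induced map on direct limits
    set fhat := Module.DirectLimit.lift R ℕ (fun k => Y.obj ((Paths.of T).obj (vtx k)))
      (fun i j h => chain vtx arr Y i j h)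
      (fun n => (ofZ n).comp (f.app ((Paths.of T).obj (vtx n))).hom)
      (by
        intro i j hij x
        simp only [LinearMap.comp_apply, hofZ]
        rw [chain_nat vtx arr f hij x, Module.DirectLimit.of_f]) with hfhat
    set ghat := Module.DirectLimit.lift R ℕ (fun k => Y.obj ((Paths.of T).obj (vtx k)))
      (fun i j h => chain vtx arr Y i j h)
      (fun n => LinearMap.comp ((iso n).hom.hom) (g.app ((Paths.of T).obj (vtx n))).hom)
      (by
        intro i j hij x
        simp only [LinearMap.comp_apply]
        rw [chain_nat vtx arr g hij x]
        exact iso_chain hij _) with hghat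
    have fhat_inj : Function.Injective fhat := by
      rw [injective_iff_map_eq_zero]
      intro z hz
      obtain ⟨i, x, rfl⟩ := Module.DirectLimit.exists_of z
      rw [hfhat, Module.DirectLimit.lift_of, LinearMap.comp_apply, hofZ] at hz
      obtain ⟨j, hij, hj⟩ := Module.DirectLimit.of.zero_exact hz
      rw [← chain_nat vtx arr f hij x] at hj
      have h8 : chain vtx arr Y i j hij x = 0 := by
        apply finj ((Paths.of T).obj (vtx j))
        simp only [map_zero]
        exact hj
      rw [← Module.DirectLimit.of_f (hij := hij), h8, map_zero]
    obtain ⟨hhat, hhspec⟩ := hEinj.out fhat fhat_inj ghat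
    refine ⟨fun n => ModuleCat.ofHom (LinearMap.comp ((iso n).inv.hom) (hhat.comp (ofZ n))), ?_, ?_⟩
    · intro n
      apply ModuleCat.hom_ext
      apply LinearMap.ext
      intro x
      have l1 : Z.map ((Paths.of T).map (arr n)) x = chain vtx arr Z n (n + 1) (Nat.le_succ n) x :=
        step_chain vtx arr Z n x
      have l2 : ofZ (n + 1) (chain vtx arr Z n (n + 1) (Nat.le_succ n) x) = ofZ n x := by
        rw [hofZ]; exact Module.DirectLimit.of_f
      show (iso (n + 1)).inv (hhat (ofZ (n + 1) (Z.map ((Paths.of T).map (arr n)) x)))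
        = X.map ((Paths.of T).map (arr n)) ((iso n).inv (hhat (ofZ n x)))
      rw [l1, l2]
      -- now show (iso (n+1)).inv y = X.map … ((iso n).inv y)
      set y := hhat (ofZ n x)
      have l3 : (iso (n + 1)).hom (X.map ((Paths.of T).map (arr n)) ((iso n).inv y))
          = (iso (n + 1)).hom ((iso (n + 1)).inv y) := by
        have := hisoElt n ((iso n).inv y)
        simp only [step] at this
        rw [this, invhom, invhom]
      have l4 := congrArg ((iso (n + 1)).inv) l3
      rw [hominv, hominv] at l4
      exact l4.symm
    · intro n
      apply ModuleCat.hom_ext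
      apply LinearMap.ext
      intro x
      show (iso n).inv (hhat (ofZ n (f.app ((Paths.of T).obj (vtx n)) x))) = g.app _ x
      have l5 : ofZ n (f.app ((Paths.of T).obj (vtx n)) x) = fhat (ofY n x) := by
        simp only [hfhat, hofY]
        rw [Module.DirectLimit.lift_of, LinearMap.comp_apply]
      rw [l5, hhspec]
      have l6 : ghat (ofY n x) = (iso n).hom (g.app ((Paths.of T).obj (vtx n)) x) := by
        simp only [hghat, hofY]
        apply Module.DirectLimit.lift_of
      exact (congrArg (fun t => (iso n).inv t) l6).trans (hominv n _)
  obtain ⟨hv, hv_step, hv_fac⟩ := key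
  refine ⟨pathsNatTrans Z X (hcAux vtx Z X hv) ?_, ?_⟩
  · intro b c a
    by_cases hcp : ∃ m, c = vtx m
    · obtain ⟨m, rfl⟩ := hcp
      obtain ⟨k, hm, hb, ha⟩ := arrow_into a
      subst hm
      subst hb
      have ha' : a = arr k := eq_of_heq ha
      subst ha'
      rw [hcAux_vtx vtx Z X hv vinj, hcAux_vtx vtx Z X hv vinj]
      exact hv_step k
    · push_neg at hcp
      exact (hzero c hcp).eq_of_tgt _ _
  · apply NatTrans.ext
    funext u
    rw [NatTrans.comp_app]
    show f.app u ≫ hcAux vtx Z X hv u = g.app u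
    by_cases hup : ∃ n, @Eq T u (vtx n)
    · obtain ⟨n, rfl⟩ := hup
      rw [hcAux_vtx vtx Z X hv vinj]
      exact hv_fac n
    · exact (hzero u (fun n hn => hup ⟨n, hn⟩)).eq_of_tgt _ _
end

section
/- Let (N_i)_{i≥0} be a family of injective left R-modules and set U_n = ∏_{i≥n} N_i with the projection maps U_n → U_{n+1}. Then the representation U = (U₀ → U₁ → U₂ → ···) is an injective object of (A_∞⁺, R-Mod); moreover every representation M embeds in such a U (choosing embeddings M_n → N_n into injectives), so every injective representation of A_∞⁺ is a direct summand of such a U. -/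
open CategoryTheory

/-- The quiver `A_∞⁺ = • → • → • → ⋯`. -/
abbrev AInfPlus : Type := ℕ

instance : Quiver AInfPlus := ⟨fun m n => PLift (m + 1 = n)⟩

/-- The representation `U = (U₀ → U₁ → ⋯)` of `A_∞⁺` with `U_n = ∏_{i ≥ n} N_i` and with the
projection maps `U_n → U_{n+1}` as structure maps. -/
noncomputable def URep (R : Type) [Ring R] (N : ℕ → ModuleCat R) :
    Paths AInfPlus ⥤ ModuleCat R :=
  Paths.lift
    { obj := fun n => ModuleCat.of R ((i : {i : ℕ // n ≤ i}) → N i.1)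
      map := fun {m n} a =>
        ModuleCat.ofHom (LinearMap.pi fun i : {i : ℕ // n ≤ i} =>
          LinearMap.proj (⟨i.1, (Nat.le_succ m).trans (le_of_eq_of_le a.down i.2)⟩ : {i : ℕ // m ≤ i})) }

namespace URepAux

lemma le_of_path : ∀ {m n : AInfPlus} (_ : Quiver.Path m n), (m : ℕ) ≤ n := by
  intro m n p
  induction p with
  | nil => exact le_refl _
  | @cons b c q e ih => exact ih.trans (Nat.le.intro e.down)

lemma path_unique : ∀ {m n : AInfPlus} (p q : Quiver.Path m n), p = q := by
  intro m n p
  induction p with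
  | nil =>
    intro q
    cases q with
    | nil => rfl
    | @cons b _ q' e =>
      exact absurd (le_of_path q') (by rw [← e.down]; exact Nat.not_succ_le_self b)
  | @cons b c p' e ih =>
    intro q
    cases q with
    | nil =>
      exact absurd (le_of_path p') (by rw [← e.down]; exact Nat.not_succ_le_self b)
    | @cons b' _ q' e' =>
      have hb : b' = b := Nat.succ_injective (e'.down.trans e.down.symm)
      subst hb
      obtain ⟨he⟩ := e
      obtain ⟨he'⟩ := e'
      rw [ih q']

instance (m n : Paths AInfPlus) : Subsingleton (m ⟶ n) := ⟨fun p q => path_unique p q⟩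

/-- A canonical path from `m` to `n` when `m ≤ n`. -/
def pathLE {m n : ℕ} (h : m ≤ n) : ((Paths.of AInfPlus).obj m ⟶ (Paths.of AInfPlus).obj n) :=
  Nat.leRecOn h (fun p => p.cons ⟨rfl⟩) Quiver.Path.nil

variable {R : Type} [Ring R]

lemma URep_map_apply (N : ℕ → ModuleCat R) {m : ℕ}
    (x : (URep R N).obj ((Paths.of AInfPlus).obj m)) :
    ∀ {n : ℕ} (p : Quiver.Path (m : AInfPlus) n) (j : {i : ℕ // n ≤ i}),
    ((URep R N).map p x) j = x ⟨j.1, (le_of_path p).trans j.2⟩ := by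
  unfold URep
  intro n p
  induction p with
  | nil => intro j; rw [Paths.lift_nil]; rfl
  | @cons b c q e ih =>
    intro j
    rw [Paths.lift_cons]
    exact ih ⟨j.1, (Nat.le.intro e.down).trans j.2⟩

variable (N : ℕ → ModuleCat R) (X : Paths AInfPlus ⥤ ModuleCat R)

/-- The family of maps associated to a natural transformation `X ⟶ URep R N`. -/
noncomputable def σmap (t : X ⟶ URep R N) (n : ℕ) :
    X.obj ((Paths.of AInfPlus).obj n) →ₗ[R] N n :=
  (LinearMap.proj (⟨n, le_refl n⟩ : {i : ℕ // n ≤ i})).comp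
    ((t.app ((Paths.of AInfPlus).obj n)).hom : X.obj ((Paths.of AInfPlus).obj n) →ₗ[R] (URep R N).obj ((Paths.of AInfPlus).obj n))

/-- The component of the natural transformation built from a family `σ`. -/
noncomputable def mkApp (σ : ∀ n : ℕ, X.obj ((Paths.of AInfPlus).obj n) →ₗ[R] N n) (n : ℕ) :
    X.obj ((Paths.of AInfPlus).obj n) ⟶ (URep R N).obj ((Paths.of AInfPlus).obj n) :=
  ModuleCat.ofHom (LinearMap.pi fun i : {i : ℕ // n ≤ i} =>
    (σ i.1).comp
      ((X.map (pathLE i.2)).hom : X.obj ((Paths.of AInfPlus).obj n) →ₗ[R] X.obj ((Paths.of AInfPlus).obj i.1)))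

/-- The natural transformation `X ⟶ URep R N` built from a family `σ`. -/
noncomputable def mk (σ : ∀ n : ℕ, X.obj ((Paths.of AInfPlus).obj n) →ₗ[R] N n) : X ⟶ URep R N where
  app n := mkApp N X σ n
  naturality {m n} f := by
    apply ModuleCat.hom_ext
    apply LinearMap.ext
    intro x
    funext j
    show σ j.1 (X.map (pathLE j.2) (X.map f x)) =
      ((URep R N).map f) (mkApp N X σ m x) j
    erw [URep_map_apply]
    show _ = σ j.1 (X.map (pathLE ((le_of_path f).trans j.2)) x)
    rw [show X.map (pathLE j.2) (X.map f x) = X.map (f ≫ pathLE j.2) x by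
      erw [X.map_comp]; rfl]
    rw [Subsingleton.elim (f ≫ pathLE j.2) (pathLE ((le_of_path f).trans j.2))]
    rfl

lemma σmap_mk (σ : ∀ n : ℕ, X.obj ((Paths.of AInfPlus).obj n) →ₗ[R] N n) :
    σmap N X (mk N X σ) = σ := by
  funext n
  apply LinearMap.ext
  intro x
  show σ n (X.map (pathLE (le_refl n)) x) = σ n x
  rw [Subsingleton.elim (pathLE (le_refl n)) (𝟙 ((Paths.of AInfPlus).obj n)), X.map_id]
  rfl

lemma app_eq (t : X ⟶ URep R N) (n : Paths AInfPlus) :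
    t.app n = mkApp N X (σmap N X t) n := by
  apply ModuleCat.hom_ext
  apply LinearMap.ext
  intro x
  funext j
  have h : (t.app ((Paths.of AInfPlus).obj j.1)) ((X.map (pathLE j.2)) x)
      = ((URep R N).map (pathLE j.2)) ((t.app n) x) :=
    ConcreteCategory.congr_hom (t.naturality (pathLE j.2)) x
  show (t.app n x) j
      = ((t.app ((Paths.of AInfPlus).obj j.1)) ((X.map (pathLE j.2)) x)) ⟨j.1, le_refl j.1⟩
  erw [h, URep_map_apply]
  rfl

lemma σmap_injective : Function.Injective (σmap N X) := by
  intro t₁ t₂ h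
  ext n : 2
  rw [app_eq N X t₁ n, app_eq N X t₂ n, h]

lemma mk_mono (σ : ∀ n : ℕ, X.obj ((Paths.of AInfPlus).obj n) →ₗ[R] N n)
    (hσi : ∀ n : ℕ, Function.Injective (σ n)) : Mono (mk N X σ) := by
  have h : ∀ n : ℕ, Mono ((mk N X σ).app ((Paths.of AInfPlus).obj n)) := by
    intro n
    rw [ModuleCat.mono_iff_injective]
    intro x y hxy
    have key : ∀ z, ((mk N X σ).app ((Paths.of AInfPlus).obj n)) z ⟨n, le_refl n⟩ = σ n z :=
      fun z => LinearMap.congr_fun (congrFun (σmap_mk N X σ) n) z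
    apply hσi n
    rw [← key x, ← key y]
    exact congrFun hxy (⟨n, le_refl n⟩ : {i : ℕ // n ≤ i})
  exact @NatTrans.mono_of_mono_app _ _ _ _ _ _ _ h

end URepAux

/-- Let `(N_i)_{i≥0}` be a family of injective left `R`-modules and
`U = (∏_{i≥0} N_i → ∏_{i≥1} N_i → ⋯)` the corresponding representation of `A_∞⁺` with the
projection maps.  Then: (a) morphisms `M ⟶ U` correspond bijectively to families of linear
maps `σ_n : M_n → N_n`; (b) `U` is an injective object of `(A_∞⁺, R-Mod)`; (c) every
representation `M` with chosen embeddings `M_n ↪ N_n` into injectives embeds into `U`;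
consequently (d) every injective representation of `A_∞⁺` is a direct summand of such a
representation `U`. -/
theorem URep_injective_and_embedding (R : Type) [Ring R] :
    (∀ (N : ℕ → ModuleCat R) (X : Paths AInfPlus ⥤ ModuleCat R),
      Function.Bijective (fun t : X ⟶ URep R N =>
        fun n : ℕ =>
          (LinearMap.proj (⟨n, le_refl n⟩ : {i : ℕ // n ≤ i})).comp
            ((t.app ((Paths.of AInfPlus).obj n)).hom : X.obj ((Paths.of AInfPlus).obj n) →ₗ[R]
              (URep R N).obj ((Paths.of AInfPlus).obj n)))) ∧
    (∀ N : ℕ → ModuleCat R, (∀ i, Module.Injective R (N i)) →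
      CategoryTheory.Injective (URep R N)) ∧
    (∀ (N : ℕ → ModuleCat R) (X : Paths AInfPlus ⥤ ModuleCat R),
      (∀ i, Module.Injective R (N i)) →
      (∀ n : ℕ, ∃ σ : X.obj ((Paths.of AInfPlus).obj n) →ₗ[R] N n, Function.Injective σ) →
      ∃ φ : X ⟶ URep R N, Mono φ) ∧
    (∀ X : Paths AInfPlus ⥤ ModuleCat R, CategoryTheory.Injective X →
      ∃ N : ℕ → ModuleCat R, (∀ i, Module.Injective R (N i)) ∧
        ∃ (i : X ⟶ URep R N) (r : URep R N ⟶ X), i ≫ r = 𝟙 X) := by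
  refine ⟨fun N X => ⟨URepAux.σmap_injective N X,
      fun σ => ⟨URepAux.mk N X σ, URepAux.σmap_mk N X σ⟩⟩, ?_, ?_, ?_⟩
  · intro N hN
    constructor
    intro A B g f hf
    haveI := hf
    have hfi : ∀ n : Paths AInfPlus, Function.Injective (f.app n) := by
      intro n
      haveI : Mono (f.app n) := inferInstance
      exact (ModuleCat.mono_iff_injective _).mp this
    choose τ hτ using fun n : ℕ =>
      (hN n).out
        ((f.app ((Paths.of AInfPlus).obj n)).hom : A.obj ((Paths.of AInfPlus).obj n) →ₗ[R] B.obj ((Paths.of AInfPlus).obj n))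
        (hfi _) (URepAux.σmap N A g n)
    refine ⟨URepAux.mk N B τ, ?_⟩
    apply URepAux.σmap_injective N A
    funext n
    apply LinearMap.ext
    intro x
    show (URepAux.σmap N B (URepAux.mk N B τ) n) ((f.app ((Paths.of AInfPlus).obj n)) x)
      = (URepAux.σmap N A g n) x
    rw [URepAux.σmap_mk]
    exact hτ n x
  · intro N X hN hσ
    choose σ hσi using hσ
    exact ⟨URepAux.mk N X σ, URepAux.mk_mono N X σ hσi⟩
  · intro X hX
    haveI := hX
    set N : ℕ → ModuleCat R := fun n => Injective.under (X.obj ((Paths.of AInfPlus).obj n)) with hNdef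
    have hNmod : ∀ i, Module.Injective R (N i) := fun i =>
      Module.injective_module_of_injective_object R (N i)
        (inj := inferInstanceAs (CategoryTheory.Injective (N i)))
    have hσ : ∀ n : ℕ, Function.Injective
        (((Injective.ι (X.obj ((Paths.of AInfPlus).obj n))).hom : X.obj ((Paths.of AInfPlus).obj n) →ₗ[R] N n)) :=
      fun n => (ModuleCat.mono_iff_injective _).mp inferInstance
    haveI := URepAux.mk_mono N X (fun n => (Injective.ι (X.obj ((Paths.of AInfPlus).obj n))).hom) hσ
    exact ⟨N, hNmod, URepAux.mk N X (fun n => (Injective.ι (X.obj ((Paths.of AInfPlus).obj n))).hom),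
      Injective.factorThru (𝟙 X) (URepAux.mk N X (fun n => (Injective.ι (X.obj ((Paths.of AInfPlus).obj n))).hom)),
      Injective.comp_factorThru (𝟙 X) (URepAux.mk N X (fun n => (Injective.ι (X.obj ((Paths.of AInfPlus).obj n))).hom))⟩
end
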